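/- Let Δ > 0, L ≥ 0, and let D_Δ be a causal sample-based differentiator with sampling period Δ that is quasi-exact in finite time over F_L: for every R ≥ 0 there exists k_R ∈ ℕ such that |ḟ(ℓΔ) − [D_Δ f](ℓΔ)| ≤ L·Δ/2 for every f ∈ F_L^R and every ℓ ≥ k_R. Then for all R, N ≥ 0 and every r ∈ ℕ with r ≥ 1, there exist f ∈ F_L^R, η ∈ E_N, and an index ℓ ≥ r such that |ḟ(ℓΔ) − [D_Δ(f + η)](ℓΔ)| ≥ 2·√(2·N·L) − L·Δ/2. Consequently, the worst-case error of D_Δ from time rΔ over F_L^R with noise bound N satisfies M_N^{L,R}(rΔ) ≥ 2·√(2·N·L) − L·Δ/2. -/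

import Mathlib

open Set Filter Topology

/-- `f ∈ F_L`: `f : [0,∞) → ℝ` is differentiable with derivative `f'`
that is Lipschitz continuous with constant `L` on `[0,∞)`. -/
def IsFL (L : ℝ) (f f' : ℝ → ℝ) : Prop :=
  (∀ t ∈ Set.Ici (0:ℝ), HasDerivWithinAt f (f' t) (Set.Ici 0) t) ∧
  ∀ s ∈ Set.Ici (0:ℝ), ∀ t ∈ Set.Ici (0:ℝ), |f' s - f' t| ≤ L * |s - t|

/-- `η ∈ E_N`: measurable noise bounded by `N` on `[0,∞)`. -/
def IsEN (N : ℝ) (η : ℝ → ℝ) : Prop :=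
  Measurable η ∧ ∀ t ∈ Set.Ici (0:ℝ), |η t| ≤ N

/-- `f ∈ F_L^R`: member of `F_L` with `|f(0)| ≤ R` and `|ḟ(0)| ≤ R`. -/
def IsFLR (L R : ℝ) (f f' : ℝ → ℝ) : Prop :=
  IsFL L f f' ∧ |f 0| ≤ R ∧ |f' 0| ≤ R

/-- A differentiator is causal if its output at time `T` depends only on the
input on `[0, T]`. -/
def Causal (D : (ℝ → ℝ) → ℝ → ℝ) : Prop :=
  ∀ u₁ u₂ T, (∀ t ∈ Set.Icc (0:ℝ) T, u₁ t = u₂ t) → D u₁ T = D u₂ T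

/-- A sample-based differentiator with sampling period `Δ` is causal if its
output at step `k` depends only on the samples `u(jΔ)` for `j ≤ k`. -/
def SampleCausal (Δ : ℝ) (D : (ℝ → ℝ) → ℕ → ℝ) : Prop :=
  ∀ u₁ u₂ : ℝ → ℝ, ∀ k : ℕ,
    (∀ j : ℕ, j ≤ k → u₁ (j * Δ) = u₂ (j * Δ)) → D u₁ k = D u₂ k

lemma myGlue {p q p' q' : ℝ → ℝ} {m : ℝ}
    (hp : ∀ t, HasDerivAt p (p' t) t) (hq : ∀ t, HasDerivAt q (q' t) t)
    (h0 : p m = q m) (h1 : p' m = q' m) (t : ℝ) :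
    HasDerivAt (fun x => if x ≤ m then p x else q x) (if t ≤ m then p' t else q' t) t := by
  rcases lt_trichotomy t m with ht | rfl | ht
  · rw [if_pos ht.le]
    refine (hp t).congr_of_eventuallyEq ?_
    filter_upwards [Iio_mem_nhds ht] with x hx
    exact if_pos (le_of_lt hx)
  · rw [if_pos le_rfl]
    have hIic : HasDerivWithinAt (fun x => if x ≤ t then p x else q x) (p' t) (Iic t) t :=
      (hp t).hasDerivWithinAt.congr (fun x hx => if_pos hx) (if_pos le_rfl)
    have hIci : HasDerivWithinAt (fun x => if x ≤ t then p x else q x) (p' t) (Ici t) t := by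
      rw [h1]
      refine (hq t).hasDerivWithinAt.congr (fun x hx => ?_) (by rw [if_pos le_rfl]; exact h0)
      rcases eq_or_lt_of_le (Set.mem_Ici.mp hx) with rfl | hlt
      · rw [if_pos le_rfl]; exact h0
      · rw [if_neg (not_le.mpr hlt)]
    have := hIic.union hIci
    rw [Iic_union_Ici] at this
    exact hasDerivWithinAt_univ.mp this
  · rw [if_neg (not_le.mpr ht)]
    refine (hq t).congr_of_eventuallyEq ?_
    filter_upwards [Ioi_mem_nhds ht] with x hx
    exact if_neg (not_le.mpr hx)

noncomputable def hfun (L N c a t : ℝ) : ℝ :=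
  if t ≤ c then 0 else if t ≤ c + a then -L*(t-c)^2 else L*(t-c-2*a)^2 - N

noncomputable def hfun' (L c a t : ℝ) : ℝ :=
  if t ≤ c then 0 else if t ≤ c + a then -(2*L)*(t-c) else (2*L)*(t-c-2*a)

lemma hfun_deriv {L N c a : ℝ} (ha : 0 ≤ a) (key : L * a ^ 2 = N / 2) (t : ℝ) :
    HasDerivAt (hfun L N c a) (hfun' L c a t) t := by
  have hinner : ∀ x : ℝ, HasDerivAt
      (fun x => if x ≤ c + a then -L*(x-c)^2 else L*(x-c-2*a)^2 - N)
      (if x ≤ c + a then -(2*L)*(x-c) else (2*L)*(x-c-2*a)) x := by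
    intro x
    have e0 : -L*((c+a)-c)^2 = L*((c+a)-c-2*a)^2 - N := by nlinarith
    have e1 : -(2*L)*((c+a)-c) = (2*L)*((c+a)-c-2*a) := by ring
    refine myGlue (p := fun y => -L*(y-c)^2) (q := fun y => L*(y-c-2*a)^2 - N)
      (p' := fun y => -(2*L)*(y-c)) (q' := fun y => (2*L)*(y-c-2*a))
      (fun y => ?_) (fun y => ?_) e0 e1 x
    · have h1 : HasDerivAt (fun y : ℝ => (y - c) ^ 2) (2*(y-c)) y := by
        simpa using (((hasDerivAt_id y).sub_const c).fun_pow 2)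
      simpa [mul_comm, mul_assoc, mul_left_comm] using h1.const_mul (-L)
    · have h1 : HasDerivAt (fun y : ℝ => (y - c - 2*a) ^ 2) (2*(y-c-2*a)) y := by
        simpa using ((((hasDerivAt_id y).sub_const c).sub_const (2*a)).fun_pow 2)
      have := (h1.const_mul L).sub_const N
      simpa [mul_comm, mul_assoc, mul_left_comm] using this
  have houter := myGlue (p := fun _ => (0:ℝ)) (p' := fun _ => (0:ℝ))
    (fun y => hasDerivAt_const y 0) hinner
    (by rw [if_pos (by linarith : c ≤ c + a)]; ring)
    (by rw [if_pos (by linarith : c ≤ c + a)]; ring) t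
  unfold hfun hfun'
  exact houter

lemma hfun_lip {L c a : ℝ} (hL : 0 ≤ L) (ha : 0 ≤ a) (s t : ℝ) (hst : s ≤ t) :
    |hfun' L c a s - hfun' L c a t| ≤ 2 * L * (t - s) := by
  unfold hfun'
  rw [abs_sub_le_iff]
  split_ifs with h1 h2 h3 h4 h5 h6 h7 h8 h9 <;>
    constructor <;> nlinarith

lemma hfun_bound {L N c a : ℝ} (hL : 0 ≤ L) (ha : 0 ≤ a) (key : L * a ^ 2 = N / 2)
    (t : ℝ) (ht : t ≤ c + 4*a) : |hfun L N c a t| ≤ N := by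
  unfold hfun
  have hN : 0 ≤ N := by nlinarith
  rw [abs_le]
  split_ifs with h1 h2 <;> constructor
  · linarith
  · linarith
  · nlinarith [mul_nonneg hL (mul_nonneg (by linarith : (0:ℝ) ≤ a - (t-c)) (by linarith : (0:ℝ) ≤ a + (t-c)))]
  · nlinarith [mul_nonneg hL (sq_nonneg (t - c))]
  · nlinarith [mul_nonneg hL (sq_nonneg (t - c - 2*a))]
  · nlinarith [mul_nonneg hL (mul_nonneg (by linarith : (0:ℝ) ≤ 2*a - (t-c-2*a)) (by linarith : (0:ℝ) ≤ 2*a + (t-c-2*a)))]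

lemma hfun_end {L c a : ℝ} (ha : 0 < a) : hfun' L c a (c + 4*a) = 4 * L * a := by
  unfold hfun'
  rw [if_neg (by linarith), if_neg (by linarith)]
  ring

theorem stmt19 (Δ L : ℝ) (hΔ : 0 < Δ) (hL : 0 ≤ L)
    (D : (ℝ → ℝ) → ℕ → ℝ) (hD : SampleCausal Δ D)
    (hquasi : ∀ R : ℝ, 0 ≤ R → ∃ kR : ℕ, ∀ f f' : ℝ → ℝ, IsFLR L R f f' →
      ∀ ℓ : ℕ, kR ≤ ℓ → |f' (ℓ * Δ) - D f ℓ| ≤ L * Δ / 2) :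
    ∀ R N : ℝ, 0 ≤ R → 0 ≤ N → ∀ r : ℕ, 1 ≤ r →
      ∃ (f f' η : ℝ → ℝ) (ℓ : ℕ), IsFLR L R f f' ∧ IsEN N η ∧ r ≤ ℓ ∧
        2 * Real.sqrt (2 * N * L) - L * Δ / 2 ≤ |f' (ℓ * Δ) - D (f + η) ℓ| := by
  intro R N hR hN r hr
  by_cases h0 : 2 * N * L = 0
  · refine ⟨fun _ => 0, fun _ => 0, fun _ => 0, r,
      ⟨⟨fun t _ => (hasDerivAt_const t (0:ℝ)).hasDerivWithinAt,
        fun s _ t _ => by simpa using mul_nonneg hL (abs_nonneg (s-t))⟩,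
        by simpa using hR, by simpa using hR⟩,
      ⟨measurable_const, fun t _ => by simpa using hN⟩, le_rfl, ?_⟩
    rw [h0, Real.sqrt_zero]
    have h1 := abs_nonneg ((fun _ => (0:ℝ)) ((r:ℝ)*Δ) - D ((fun _ => (0:ℝ)) + fun _ => (0:ℝ)) r)
    have h2 : 0 ≤ L * Δ := mul_nonneg hL hΔ.le
    simp only at h1 ⊢
    linarith
  · have hN' : 0 < N := lt_of_le_of_ne hN (by rintro rfl; simp at h0)
    have hL' : 0 < L := lt_of_le_of_ne hL (by rintro rfl; simp at h0)
    set s0 := Real.sqrt (2*N*L) with hs0def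
    have hs0 : 0 < s0 := Real.sqrt_pos.mpr (by positivity)
    have hs2 : s0^2 = 2*N*L := Real.sq_sqrt (by positivity)
    set a := s0 / (2*L) with hadef
    have ha : 0 < a := by positivity
    have key : L * a ^ 2 = N / 2 := by
      rw [hadef, div_pow]
      field_simp
      nlinarith [hs2]
    obtain ⟨kR, hkR⟩ := hquasi R hR
    set ℓ : ℕ := max r (max kR ⌈4*a/Δ⌉₊) with hℓdef
    have hlr : r ≤ ℓ := le_max_left _ _
    have hlk : kR ≤ ℓ := le_trans (le_max_left _ _) (le_max_right _ _)
    have hceil : ⌈4*a/Δ⌉₊ ≤ ℓ := le_trans (le_max_right _ _) (le_max_right _ _)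
    have hT4a : 4*a ≤ (ℓ:ℝ)*Δ := by
      have h1 : 4*a/Δ ≤ (⌈4*a/Δ⌉₊:ℝ) := Nat.le_ceil _
      have h2 : ((⌈4*a/Δ⌉₊:ℕ):ℝ) ≤ (ℓ:ℝ) := Nat.cast_le.mpr hceil
      rw [div_le_iff₀ hΔ] at h1
      nlinarith
    set c := (ℓ:ℝ)*Δ - 4*a with hcdef
    have hc0 : 0 ≤ c := by rw [hcdef]; linarith
    have hTca : (ℓ:ℝ)*Δ = c + 4*a := by rw [hcdef]; ring
    have hcont : Continuous (hfun L N c a) :=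
      continuous_iff_continuousAt.mpr fun t => (hfun_deriv ha.le key t).continuousAt
    have lipdiv : ∀ s t : ℝ, |hfun' L c a s / 2 - hfun' L c a t / 2| ≤ L * |s - t| := by
      intro s t
      rcases le_total s t with h | h
      · have := hfun_lip (c := c) hL ha.le s t h
        rw [abs_of_nonpos (by linarith : s - t ≤ 0), div_sub_div_same, abs_div, abs_two]
        linarith
      · have := hfun_lip (c := c) hL ha.le t s h
        rw [abs_of_nonneg (by linarith : 0 ≤ s - t), div_sub_div_same, abs_div, abs_two,
          abs_sub_comm]
        linarith
    have hzero : hfun L N c a 0 = 0 := by unfold hfun; rw [if_pos hc0]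
    have hzero' : hfun' L c a 0 = 0 := by unfold hfun'; rw [if_pos hc0]
    have hflr2 : IsFLR L R (fun t => -(hfun L N c a t)/2) (fun t => -(hfun' L c a t)/2) := by
      refine ⟨⟨fun t _ => (((hfun_deriv ha.le key t).neg).div_const 2).hasDerivWithinAt,
        fun s _ t _ => ?_⟩, by simp [hzero]; exact hR, by simp [hzero']; exact hR⟩
      have h1 := lipdiv s t
      have h2 : -(hfun' L c a s)/2 - -(hfun' L c a t)/2
          = -(hfun' L c a s / 2 - hfun' L c a t / 2) := by ring
      rw [h2, abs_neg]
      exact h1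
    refine ⟨fun t => hfun L N c a t / 2, fun t => hfun' L c a t / 2,
      fun t => if t ≤ (ℓ:ℝ)*Δ then -(hfun L N c a t) else 0, ℓ, ?_, ?_, hlr, ?_⟩
    · refine ⟨⟨fun t _ => ((hfun_deriv ha.le key t).div_const 2).hasDerivWithinAt,
        fun s _ t _ => lipdiv s t⟩, by simp [hzero]; exact hR, by simp [hzero']; exact hR⟩
    · constructor
      · exact Measurable.ite measurableSet_Iic hcont.neg.measurable measurable_const
      · intro t _
        show |if t ≤ (ℓ:ℝ)*Δ then -(hfun L N c a t) else 0| ≤ N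
        by_cases h : t ≤ (ℓ:ℝ)*Δ
        · rw [if_pos h, abs_neg]
          exact hfun_bound hL ha.le key t (by linarith)
        · rw [if_neg h]; simpa using hN
    · have hsc : D ((fun t => hfun L N c a t / 2) +
          fun t => if t ≤ (ℓ:ℝ)*Δ then -(hfun L N c a t) else 0) ℓ
          = D (fun t => -(hfun L N c a t)/2) ℓ := by
        refine hD _ _ ℓ fun j hj => ?_
        have hjT : (j:ℝ)*Δ ≤ (ℓ:ℝ)*Δ := by
          have : (j:ℝ) ≤ (ℓ:ℝ) := Nat.cast_le.mpr hj
          nlinarith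
        simp only [Pi.add_apply, if_pos hjT]
        ring
      have hq2 := hkR _ _ hflr2 ℓ hlk
      have hend : hfun' L c a ((ℓ:ℝ)*Δ) = 4*L*a := by
        rw [hTca]; exact hfun_end ha
      have hval : 4*L*a = 2*s0 := by
        rw [hadef]; field_simp; ring
      simp only [hend] at hq2
      simp only [hsc, hend]
      have h1 := (abs_le.mp hq2).1
      have h2 := le_abs_self (4*L*a/2 - D (fun t => -(hfun L N c a t)/2) ℓ)
      linarith
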